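/- For every Steiner triple system S of order n, γ(S) ≠ (1/3)·C(n,2) − 1. -/

import Mathlib

/-- A Steiner quasigroup structure on `X`. -/
def IsSteinerQuasigroup {X : Type*} (star : X → X → X) : Prop :=
  (∀ a, star a a = a) ∧ (∀ a b, star a b = star b a) ∧
    (∀ a b, star a (star a b) = b)

/-- The blocks of the Steiner triple system associated to a Steiner quasigroup:
the 3-element subsets `{a,b,c}` with `a,b,c` distinct and `a ⋆ b = c`. -/
def blocksOf {X : Type*} [DecidableEq X] (star : X → X → X) : Set (Finset X) :=
  {B | ∃ a b c : X, a ≠ b ∧ a ≠ c ∧ b ≠ c ∧ B = {a, b, c} ∧ star a b = c}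

/-- `A(S) = {{a⋆b, b⋆c, c⋆a} : a,b,c pairwise distinct, {a,b,c} ∉ S}`. -/
def ASet {X : Type*} [DecidableEq X] (star : X → X → X) : Set (Finset X) :=
  {B | ∃ a b c : X, a ≠ b ∧ a ≠ c ∧ b ≠ c ∧
    ({a, b, c} : Finset X) ∉ blocksOf star ∧
    B = {star a b, star b c, star c a}}

/-- `B(S) = {{a⋆b, b⋆c, c⋆a} : a,b,c pairwise distinct}`. -/
def BSet {X : Type*} [DecidableEq X] (star : X → X → X) : Set (Finset X) :=
  {B | ∃ a b c : X, a ≠ b ∧ a ≠ c ∧ b ≠ c ∧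
    B = {star a b, star b c, star c a}}

/-- `α(S) = |A(S)|`. -/
noncomputable def alphaInv {X : Type*} [DecidableEq X] (star : X → X → X) : ℕ :=
  (ASet star).ncard

/-- `β(S) = |B(S)|`. -/
noncomputable def betaInv {X : Type*} [DecidableEq X] (star : X → X → X) : ℕ :=
  (BSet star).ncard

/-- A pasch configuration: four blocks `{a,b,c}, {a,d,e}, {f,b,d}, {f,c,e}`
with `a,b,c,d,e,f` pairwise distinct. -/
def IsPasch {X : Type*} [DecidableEq X] (P : Set (Finset X)) : Prop :=
  ∃ a b c d e f : X, ([a, b, c, d, e, f] : List X).Pairwise (· ≠ ·) ∧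
    P = {({a, b, c} : Finset X), {a, d, e}, {f, b, d}, {f, c, e}}

/-- A Steiner triple system is anti-pasch if it contains no pasch configuration. -/
def IsAntiPasch {X : Type*} [DecidableEq X] (star : X → X → X) : Prop :=
  ∀ P : Set (Finset X), IsPasch P → ¬ P ⊆ blocksOf star



namespace SQ

set_option linter.unusedSectionVars false


variable {X : Type*} [DecidableEq X] {star : X → X → X}

lemma ne_left (hq : IsSteinerQuasigroup star) {a b : X} (h : a ≠ b) : star a b ≠ a := by
  intro hab
  have h2 := hq.2.2 a b
  rw [hab, hq.1] at h2
  exact h h2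

lemma ne_right (hq : IsSteinerQuasigroup star) {a b : X} (h : a ≠ b) : star a b ≠ b := by
  intro hab
  have h2 := hq.2.2 b a
  rw [hq.2.1 b a, hab, hq.1] at h2
  exact h h2.symm

/-- from `a⋆b = c` deduce `a⋆c = b`. -/
lemma third (hq : IsSteinerQuasigroup star) {a b c : X} (h : star a b = c) :
    star a c = b := by rw [← h, hq.2.2]

/-- from `a⋆b = c` deduce `b⋆c = a`. -/
lemma third2 (hq : IsSteinerQuasigroup star) {a b c : X} (h : star a b = c) :
    star b c = a := by rw [← h, hq.2.1 a b, hq.2.2]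

lemma mk_mem (hq : IsSteinerQuasigroup star) {a b : X} (h : a ≠ b) :
    ({a, b, star a b} : Finset X) ∈ blocksOf star :=
  ⟨a, b, star a b, h, (ne_left hq h).symm, (ne_right hq h).symm, rfl, rfl⟩

lemma block_eq (hq : IsSteinerQuasigroup star) {B : Finset X} (hB : B ∈ blocksOf star)
    {p q : X} (hp : p ∈ B) (hq2 : q ∈ B) (hpq : p ≠ q) : B = {p, q, star p q} := by
  obtain ⟨a, b, c, hab, hac, hbc, rfl, habc⟩ := hB
  have hba : star b a = c := (hq.2.1 b a).trans habc
  have hac' : star a c = b := third hq habc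
  have hca : star c a = b := (hq.2.1 c a).trans hac'
  have hbc' : star b c = a := third2 hq habc
  have hcb : star c b = a := (hq.2.1 c b).trans hbc'
  simp only [Finset.mem_insert, Finset.mem_singleton] at hp hq2
  rcases hp with rfl | rfl | rfl <;> rcases hq2 with rfl | rfl | rfl <;>
    first
      | exact absurd rfl hpq
      | (ext t
         simp only [habc, hba, hac', hca, hbc', hcb, Finset.mem_insert, Finset.mem_singleton]
         all_goals tauto)

lemma block_prod (hq : IsSteinerQuasigroup star) {a b c : X}
    (hac : a ≠ c) (hbc : b ≠ c) (hab : a ≠ b)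
    (hB : ({a, b, c} : Finset X) ∈ blocksOf star) : star a b = c := by
  have h := block_eq hq hB (by simp) (by simp : b ∈ ({a,b,c}:Finset X)) hab
  have hc : c ∈ ({a, b, star a b} : Finset X) := h ▸ (by simp)
  simp only [Finset.mem_insert, Finset.mem_singleton] at hc
  rcases hc with rfl | rfl | rfl
  · exact absurd rfl hac
  · exact absurd rfl hbc
  · rfl


lemma tri_eq {a b c : X} : ({a, b, c} : Finset X) = {b, c, a} := by
  ext t; simp only [Finset.mem_insert, Finset.mem_singleton]; tauto

lemma second_block (hq : IsSteinerQuasigroup star) {B₀ : Finset X}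
    (h1 : B₀ ∈ blocksOf star) (h2 : B₀ ∈ ASet star) :
    ∃ B₁, B₁ ∈ blocksOf star ∧ B₁ ∈ ASet star ∧ B₁ ≠ B₀ := by
  obtain ⟨a, b, c, hab, hac, hbc, hnb, rfl⟩ := h2
  set x := star a b with hx
  set y := star b c with hy
  set z := star c a with hz
  -- basic distinctness
  have hxa : x ≠ a := ne_left hq hab
  have hxb : x ≠ b := ne_right hq hab
  have hyb : y ≠ b := ne_left hq hbc
  have hyc : y ≠ c := ne_right hq hbc
  have hzc : z ≠ c := ne_left hq hac.symm
  have hza : z ≠ a := ne_right hq hac.symm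
  have hxc : x ≠ c := by
    intro h
    apply hnb
    have := mk_mem hq hab
    rwa [← hx, h] at this
  have hya : y ≠ a := by
    intro h
    apply hnb
    have := mk_mem hq hbc
    rw [← hy, h] at this
    rwa [show ({b, c, a} : Finset X) = {a, b, c} from tri_eq.symm] at this
  have hzb : z ≠ b := by
    intro h
    apply hnb
    have := mk_mem hq (show c ≠ a from hac.symm)
    rw [← hz, h] at this
    rwa [show ({c, a, b} : Finset X) = {a, b, c} from tri_eq] at this
  have hxy : x ≠ y := by
    intro h
    apply hac
    have h1' := hq.2.2 b a
    have h2' := hq.2.2 b c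
    rw [hq.2.1 b a, ← hx] at h1'
    rw [← hy] at h2'
    rw [h] at h1'
    exact h1'.symm.trans h2'
  have hyz : y ≠ z := by
    intro h
    apply hab.symm
    have h1' := hq.2.2 c b
    have h2' := hq.2.2 c a
    rw [hq.2.1 c b, ← hy] at h1'
    rw [← hz] at h2'
    rw [h] at h1'
    exact h1'.symm.trans h2'
  have hxz : x ≠ z := by
    intro h
    apply hbc
    have h1' := hq.2.2 a b
    have h2' := hq.2.2 a c
    rw [← hx] at h1'
    rw [hq.2.1 a c, ← hz] at h2'
    rw [h] at h1'
    exact h1'.symm.trans h2'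
  -- products within the block B₀ = {x,y,z}
  have hxyz : star x y = z := block_prod hq hxz hyz hxy h1
  have hyzx : star y z = x := third2 hq hxyz
  have hzxy : star z x = y := third2 hq hyzx
  -- the image products for the triple (c, y, z)
  have hcy : star c y = b := third2 hq hy.symm
  have hcz : star c z = a := third hq hz.symm
  have hzc' : star z c = a := (hq.2.1 z c).trans hcz
  refine ⟨{a, b, x}, ?_, ?_, ?_⟩
  · have := mk_mem hq hab
    rwa [← hx] at this
  · refine ⟨c, y, z, hyc.symm, hzc.symm, hyz, ?_, ?_⟩
    · intro hmem
      have := block_prod hq hzc.symm hyz hyc.symm hmem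
      rw [hcy] at this
      exact hzb this.symm
    · rw [hcy, hyzx, hzc']
      exact tri_eq
  · intro h
    have : a ∈ ({x, y, z} : Finset X) := h ▸ (by simp)
    simp only [Finset.mem_insert, Finset.mem_singleton] at this
    rcases this with h' | h' | h'
    exacts [hxa h'.symm, hya h'.symm, hza h'.symm]

open Finset in
lemma card_blocks [Fintype X] (hq : IsSteinerQuasigroup star) :
    6 * (blocksOf star).ncard = Fintype.card X * Fintype.card X - Fintype.card X := by
  classical
  set g : X × X → Finset X := fun p => {p.1, p.2, star p.1 p.2} with hg
  set D := (Finset.univ : Finset X).offDiag with hD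
  set T := D.image g with hT
  have hfib : ∀ B ∈ T, (D.filter (fun p => g p = B)).card = 6 := by
    intro B hB
    obtain ⟨p, hp, rfl⟩ := Finset.mem_image.mp hB
    have hpne : p.1 ≠ p.2 := (Finset.mem_offDiag.mp hp).2.2
    have hblock : g p ∈ blocksOf star := mk_mem hq hpne
    have hfe : D.filter (fun q => g q = g p) = (g p).offDiag := by
      ext q
      simp only [Finset.mem_filter, Finset.mem_offDiag, hD, Finset.mem_univ, true_and]
      constructor
      · rintro ⟨hq1, hq2⟩
        refine ⟨?_, ?_, hq1⟩
        · rw [← hq2]; simp [hg]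
        · rw [← hq2]; simp [hg]
      · rintro ⟨h1, h2, h3⟩
        refine ⟨h3, ?_⟩
        exact (block_eq hq hblock h1 h2 h3).symm
    rw [hfe, Finset.offDiag_card]
    have hcard3 : (g p).card = 3 := by
      have h1 := ne_left hq hpne
      have h2 := ne_right hq hpne
      simp only [hg]
      rw [Finset.card_insert_of_notMem (by simp [hpne, h1.symm]),
        Finset.card_insert_of_notMem (by simp [h2.symm]), Finset.card_singleton]
    rw [hcard3]
  have hsum := Finset.card_eq_sum_card_fiberwise
    (f := g) (s := D) (t := T) (fun x hx => Finset.mem_image_of_mem g hx)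
  rw [Finset.sum_congr rfl hfib, Finset.sum_const, smul_eq_mul] at hsum
  have hTset : blocksOf star = ↑T := by
    ext B
    constructor
    · rintro ⟨a, b, c, hab, hac, hbc, rfl, habc⟩
      refine Finset.mem_coe.mpr (Finset.mem_image.mpr ⟨(a, b), ?_, ?_⟩)
      · exact Finset.mem_offDiag.mpr ⟨Finset.mem_univ _, Finset.mem_univ _, hab⟩
      · simp only [hg, habc]
    · intro hB
      obtain ⟨p, hp, rfl⟩ := Finset.mem_image.mp (Finset.mem_coe.mp hB)
      exact mk_mem hq (Finset.mem_offDiag.mp hp).2.2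
  rw [hTset, Set.ncard_coe_finset]
  have hDcard : D.card = Fintype.card X * Fintype.card X - Fintype.card X := by
    rw [hD, Finset.offDiag_card, Finset.card_univ]
  omega

end SQ

/-- For every Steiner triple system `S` of order `n`,
`γ(S) ≠ (1/3)·C(n,2) − 1` (stated multiplied by 3, in ℤ). -/


theorem stmt19 {X : Type*} [Fintype X] [DecidableEq X]
    (star : X → X → X) (hq : IsSteinerQuasigroup star)
    (n : ℕ) (hcard : Fintype.card X = n) :
    3 * ((betaInv star : ℤ) - alphaInv star) ≠ (n.choose 2 : ℤ) - 3 := by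

  classical
  have hU : BSet star = ASet star ∪ blocksOf star := by
    ext B
    constructor
    · rintro ⟨a, b, c, hab, hac, hbc, rfl⟩
      by_cases h : ({a, b, c} : Finset X) ∈ blocksOf star
      · right
        have habc := SQ.block_prod hq hac hbc hab h
        have hbc' := SQ.third2 hq habc
        have hca : star c a = b := (hq.2.1 c a).trans (SQ.third hq habc)
        rw [habc, hbc', hca]
        rwa [show ({c, a, b} : Finset X) = {a, b, c} from SQ.tri_eq]
      · exact Or.inl ⟨a, b, c, hab, hac, hbc, h, rfl⟩
    · rintro (⟨a, b, c, hab, hac, hbc, _, rfl⟩ | ⟨a, b, c, hab, hac, hbc, rfl, habc⟩)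
      · exact ⟨a, b, c, hab, hac, hbc, rfl⟩
      · refine ⟨a, b, c, hab, hac, hbc, ?_⟩
        have hbc' := SQ.third2 hq habc
        have hca : star c a = b := (hq.2.1 c a).trans (SQ.third hq habc)
        rw [habc, hbc', hca]
        exact SQ.tri_eq.trans SQ.tri_eq
  have hfinS : (blocksOf star).Finite := Set.toFinite _
  have hfinA : (ASet star).Finite := Set.toFinite _
  have hb : betaInv star = alphaInv star + (blocksOf star \ ASet star).ncard := by
    show (BSet star).ncard = (ASet star).ncard + (blocksOf star \ ASet star).ncard
    rw [hU, ← Set.union_diff_self,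
      Set.ncard_union_eq Set.disjoint_sdiff_right hfinA hfinS.diff]
  have hs : (blocksOf star).ncard = (blocksOf star ∩ ASet star).ncard + (blocksOf star \ ASet star).ncard := by
    conv_lhs => rw [← Set.inter_union_diff (blocksOf star) (ASet star)]
    exact Set.ncard_union_eq (Set.disjoint_left.mpr fun x hx hx2 => hx2.2 hx.2)
      (hfinS.inter_of_left _) hfinS.diff
  have hk : (blocksOf star ∩ ASet star).ncard ≠ 1 := by
    intro h
    obtain ⟨B₀, hB⟩ := Set.ncard_eq_one.mp h
    have hB₀ : B₀ ∈ blocksOf star ∩ ASet star := by rw [hB]; rfl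
    obtain ⟨B₁, hb1, hb2, hb3⟩ := SQ.second_block hq hB₀.1 hB₀.2
    have hmem : B₁ ∈ blocksOf star ∩ ASet star := ⟨hb1, hb2⟩
    rw [hB] at hmem
    exact hb3 hmem
  have hcount : 6 * (blocksOf star).ncard = n * n - n := by
    have := SQ.card_blocks hq (star := star)
    rwa [hcard] at this
  have hnn : n * (n - 1) = n * n - n := by rw [Nat.mul_sub, mul_one]
  have hch : n.choose 2 * 2 = n * (n - 1) := by
    rw [Nat.choose_two_right]
    apply Nat.div_mul_cancel
    rcases n with _ | m
    · simp
    · have hev := Nat.even_mul_succ_self m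
      simpa [Nat.succ_sub_one, Nat.mul_comm] using hev.two_dvd
  have key : n.choose 2 * 2 = 6 * (blocksOf star).ncard := hch.trans (hnn.trans hcount.symm)
  omega
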